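/- arXiv:1701.05515 — 4 statements merged into one kernel-verified Lean document; each statement's English description precedes it below -/
import Mathlib

section
/- Let p > 2, let p₁ satisfy 0 ≤ p₁ < p − 2, and let k₀ > 0, k₂ > 0. Then there exists k₁* > 0 such that for every k₁ with 0 ≤ k₁ ≤ k₁*, the function f(r) = k₀·|r|^(p−2) − k₁·|r|^(p₁) + k₂ with antiderivative F(r) = ∫₀^r f(s) ds satisfies: there exist constants a₀, b₀ > 0 and a₁, b₁ ≥ 0 with |F(r)| ≤ a₀·|r|^(p−1) + a₁·|r| and F(r)·r ≥ b₀·|r|^p + b₁·r² for all r ∈ ℝ. -/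
open intervalIntegral Real

lemma int_abs_rpow (q : ℝ) (hq : 0 ≤ q) (r : ℝ) :
    ∫ s in (0:ℝ)..r, |s| ^ q = r * |r| ^ q / (q + 1) := by
  have key : ∀ r : ℝ, 0 ≤ r → ∫ s in (0:ℝ)..r, |s| ^ q = r * |r| ^ q / (q + 1) := by
    intro r hr
    have : ∫ s in (0:ℝ)..r, |s| ^ q = ∫ s in (0:ℝ)..r, s ^ q := by
      apply intervalIntegral.integral_congr
      intro s hs
      rw [Set.uIcc_of_le hr] at hs
      simp [abs_of_nonneg hs.1]
    rw [this, integral_rpow (Or.inl (by linarith)), Real.zero_rpow (by linarith), abs_of_nonneg hr]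
    rcases eq_or_lt_of_le hr with h0 | h0
    · rw [← h0, Real.zero_rpow (by intro h; linarith : q + 1 ≠ 0)]
      simp
    · rw [Real.rpow_add h0, Real.rpow_one]
      ring
  rcases le_or_gt 0 r with hr | hr
  · exact key r hr
  · have h1 : ∫ s in (0:ℝ)..r, |s| ^ q = ∫ s in (0:ℝ)..r, |(-s)| ^ q := by simp
    rw [h1, intervalIntegral.integral_comp_neg (fun s => |s| ^ q)]
    rw [neg_zero, show (∫ s in (-r)..(0:ℝ), |s| ^ q) = -∫ s in (0:ℝ)..(-r), |s| ^ q from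
      (intervalIntegral.integral_symm _ _)]
    rw [key (-r) (by linarith), abs_neg]
    ring

lemma interp (x a b c : ℝ) (hx : 0 ≤ x) (ha : 0 < a) (hab : a ≤ b) (hbc : b ≤ c) :
    x ^ b ≤ x ^ a + x ^ c := by
  rcases eq_or_lt_of_le hx with h0 | h0
  · rw [← h0, Real.zero_rpow (by linarith), Real.zero_rpow (by linarith),
      Real.zero_rpow (by linarith)]; norm_num
  · rcases le_total x 1 with h1 | h1
    · have := Real.rpow_le_rpow_of_exponent_ge h0 h1 hab
      have h2 : (0:ℝ) ≤ x ^ c := Real.rpow_nonneg hx c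
      linarith
    · have := Real.rpow_le_rpow_of_exponent_le h1 hbc
      have h2 : (0:ℝ) ≤ x ^ a := Real.rpow_nonneg hx a
      linarith

lemma mul_rpow_self (A q : ℝ) (hA : 0 ≤ A) (hq : 0 ≤ q) : A * A ^ q = A ^ (q + 1) := by
  rcases eq_or_lt_of_le hA with h0 | h0
  · rw [← h0, Real.zero_rpow (by intro h; linarith : q + 1 ≠ 0), zero_mul]
  · rw [Real.rpow_add h0, Real.rpow_one]; ring

lemma sq_mul_rpow (A q : ℝ) (hA : 0 ≤ A) (hq : 0 ≤ q) : A ^ 2 * A ^ q = A ^ (q + 2) := by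
  rcases eq_or_lt_of_le hA with h0 | h0
  · rw [← h0, Real.zero_rpow (by intro h; linarith : q + 2 ≠ 0)]; norm_num
  · rw [Real.rpow_add h0, show A ^ (2:ℝ) = A ^ 2 by
      rw [show (2:ℝ) = ((2:ℕ):ℝ) by norm_num, Real.rpow_natCast]]
    ring


set_option maxHeartbeats 1000000 in
/-- For the example nonlinearity `f(r) = k₀|r|^(p-2) - k₁|r|^(p₁) + k₂` with `p > 2`,
`0 ≤ p₁ < p - 2`, `k₀ > 0`, `k₂ > 0`, there is `k₁* > 0` such that for all
`0 ≤ k₁ ≤ k₁*` the antiderivative `F(r) = ∫₀^r f(s) ds` satisfies the growth and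
coercivity conditions `|F(r)| ≤ a₀|r|^(p-1) + a₁|r|` and `F(r)·r ≥ b₀|r|^p + b₁r²`. -/
theorem example_nonlinearity_conditions (p p₁ k₀ k₂ : ℝ) (hp : 2 < p)
    (hp₁ : 0 ≤ p₁) (hp₁' : p₁ < p - 2) (hk₀ : 0 < k₀) (hk₂ : 0 < k₂) :
    ∃ k₁star > (0:ℝ), ∀ k₁ : ℝ, 0 ≤ k₁ → k₁ ≤ k₁star →
      ∃ a₀ > (0:ℝ), ∃ b₀ > (0:ℝ), ∃ a₁ ≥ (0:ℝ), ∃ b₁ ≥ (0:ℝ),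
        ∀ r : ℝ,
          |∫ s in (0:ℝ)..r, (k₀ * |s| ^ (p - 2) - k₁ * |s| ^ p₁ + k₂)| ≤
              a₀ * |r| ^ (p - 1) + a₁ * |r| ∧
          b₀ * |r| ^ p + b₁ * r ^ 2 ≤
              (∫ s in (0:ℝ)..r, (k₀ * |s| ^ (p - 2) - k₁ * |s| ^ p₁ + k₂)) * r := by
  have hp1 : (0:ℝ) < p - 1 := by linarith
  have hp2 : (0:ℝ) ≤ p - 2 := by linarith
  have hq1 : (0:ℝ) < p₁ + 1 := by linarith
  set c : ℝ := min (k₀ / (2 * (p - 1))) (k₂ / 2) with hc_def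
  have hc : 0 < c := lt_min (by positivity) (by positivity)
  refine ⟨(p₁ + 1) * c, by positivity, fun k₁ hk₁ hk₁' => ?_⟩
  have hd : k₁ / (p₁ + 1) ≤ c := by
    rw [div_le_iff₀ hq1]; linarith [hk₁']
  have hd0 : 0 ≤ k₁ / (p₁ + 1) := by positivity
  set d : ℝ := k₁ / (p₁ + 1) with hdd
  have hc1 : c ≤ k₀ / (2 * (p - 1)) := min_le_left _ _
  have hc2 : c ≤ k₂ / 2 := min_le_right _ _
  refine ⟨k₀ / (p - 1) + c, by positivity, k₀ / (2 * (p - 1)), by positivity,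
    k₂ + c, by positivity, k₂ / 2, by positivity, fun r => ?_⟩
  -- compute the integral
  have hcont : ∀ q : ℝ, 0 ≤ q → Continuous fun s : ℝ => |s| ^ q := fun q hq =>
    continuous_abs.rpow_const (fun x => Or.inr hq)
  have hF : (∫ s in (0:ℝ)..r, (k₀ * |s| ^ (p - 2) - k₁ * |s| ^ p₁ + k₂)) =
      k₀ * (r * |r| ^ (p - 2)) / (p - 1) - k₁ * (r * |r| ^ p₁) / (p₁ + 1) + k₂ * r := by
    have h1 : Continuous fun s : ℝ => k₀ * |s| ^ (p - 2) :=
      continuous_const.mul (hcont _ hp2)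
    have h2 : Continuous fun s : ℝ => k₁ * |s| ^ p₁ :=
      continuous_const.mul (hcont _ hp₁)
    rw [intervalIntegral.integral_add (f := fun s : ℝ => k₀ * |s| ^ (p - 2) - k₁ * |s| ^ p₁) ((h1.sub h2).intervalIntegrable _ _)
        (continuous_const.intervalIntegrable _ _),
      intervalIntegral.integral_sub (h1.intervalIntegrable _ _) (h2.intervalIntegrable _ _),
      intervalIntegral.integral_const_mul, intervalIntegral.integral_const_mul,
      intervalIntegral.integral_const, int_abs_rpow _ hp2, int_abs_rpow _ hp₁]
    simp [smul_eq_mul]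
    ring
  set A : ℝ := |r| with hAdef
  have hA : 0 ≤ A := abs_nonneg r
  have e1 : A * A ^ (p - 2) = A ^ (p - 1) := by
    rw [mul_rpow_self A _ hA hp2]; ring_nf
  have e2 : A * A ^ p₁ = A ^ (p₁ + 1) := mul_rpow_self A _ hA hp₁
  have e3 : A ^ 2 * A ^ (p - 2) = A ^ p := by
    rw [sq_mul_rpow A _ hA hp2]; ring_nf
  have e4 : A ^ 2 * A ^ p₁ = A ^ (p₁ + 2) := sq_mul_rpow A _ hA hp₁
  have hr2 : r ^ 2 = A ^ 2 := (sq_abs r).symm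
  have h2exp : A ^ (2:ℝ) = A ^ 2 := by
    rw [show (2:ℝ) = ((2:ℕ):ℝ) by norm_num, Real.rpow_natCast]
  have hA1 : A ^ (1:ℝ) = A := Real.rpow_one A
  have hint1 : A ^ (p₁ + 1) ≤ A + A ^ (p - 1) := by
    have := interp A 1 (p₁ + 1) (p - 1) hA one_pos (by linarith) (by linarith)
    rwa [hA1] at this
  have hint2 : A ^ (p₁ + 2) ≤ r ^ 2 + A ^ p := by
    have := interp A 2 (p₁ + 2) p hA two_pos (by linarith) (by linarith)
    rwa [h2exp, ← hr2] at this
  have hAp : 0 ≤ A ^ p := Real.rpow_nonneg hA p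
  have hAp1 : 0 ≤ A ^ (p - 1) := Real.rpow_nonneg hA _
  have hAp2 : 0 ≤ A ^ (p - 2) := Real.rpow_nonneg hA _
  have hAq1 : 0 ≤ A ^ (p₁ + 1) := Real.rpow_nonneg hA _
  have hAq2 : 0 ≤ A ^ (p₁ + 2) := Real.rpow_nonneg hA _
  have hAq : 0 ≤ A ^ p₁ := Real.rpow_nonneg hA _
  constructor
  · -- growth
    rw [hF]
    have tri : |k₀ * (r * A ^ (p - 2)) / (p - 1) - k₁ * (r * A ^ p₁) / (p₁ + 1) + k₂ * r| ≤
        |k₀ * (r * A ^ (p - 2)) / (p - 1)| + |k₁ * (r * A ^ p₁) / (p₁ + 1)| + |k₂ * r| := by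
      calc |k₀ * (r * A ^ (p - 2)) / (p - 1) - k₁ * (r * A ^ p₁) / (p₁ + 1) + k₂ * r|
          ≤ |k₀ * (r * A ^ (p - 2)) / (p - 1) - k₁ * (r * A ^ p₁) / (p₁ + 1)| + |k₂ * r| :=
            abs_add_le _ _
        _ ≤ |k₀ * (r * A ^ (p - 2)) / (p - 1)| + |k₁ * (r * A ^ p₁) / (p₁ + 1)| + |k₂ * r| := by
            have := abs_sub (k₀ * (r * A ^ (p - 2)) / (p - 1)) (k₁ * (r * A ^ p₁) / (p₁ + 1))
            linarith
    have a1 : |k₀ * (r * A ^ (p - 2)) / (p - 1)| = k₀ / (p - 1) * A ^ (p - 1) := by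
      rw [abs_div, abs_mul, abs_mul, abs_of_pos hk₀, abs_of_pos hp1,
        abs_of_nonneg hAp2, ← hAdef, e1]
      ring
    have a2 : |k₁ * (r * A ^ p₁) / (p₁ + 1)| = d * A ^ (p₁ + 1) := by
      rw [abs_div, abs_mul, abs_mul, abs_of_nonneg hk₁, abs_of_pos hq1,
        abs_of_nonneg hAq, ← hAdef, e2, hdd]
      ring
    have a3 : |k₂ * r| = k₂ * A := by
      rw [abs_mul, abs_of_pos hk₂, ← hAdef]
    rw [a1, a2, a3] at tri
    have hb : d * A ^ (p₁ + 1) ≤ c * (A + A ^ (p - 1)) :=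
      mul_le_mul hd hint1 hAq1 hc.le
    nlinarith [hb, tri, hA, hAp1]
  · -- coercivity
    rw [hF]
    have key : (k₀ * (r * A ^ (p - 2)) / (p - 1) - k₁ * (r * A ^ p₁) / (p₁ + 1) + k₂ * r) * r =
        k₀ / (p - 1) * A ^ p - d * A ^ (p₁ + 2) + k₂ * r ^ 2 := by
      have expand : (k₀ * (r * A ^ (p - 2)) / (p - 1) - k₁ * (r * A ^ p₁) / (p₁ + 1) + k₂ * r) * r
          = k₀ * (r ^ 2 * A ^ (p - 2)) / (p - 1) - k₁ * (r ^ 2 * A ^ p₁) / (p₁ + 1)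
            + k₂ * r ^ 2 := by ring
      rw [expand, hr2, e3, e4, hdd]
      ring
    rw [key]
    have hb : d * A ^ (p₁ + 2) ≤ c * (r ^ 2 + A ^ p) :=
      mul_le_mul hd hint2 hAq2 hc.le
    have hcr : c * (r ^ 2 + A ^ p) ≤ k₂ / 2 * r ^ 2 + k₀ / (2 * (p - 1)) * A ^ p := by
      have s1 : c * r ^ 2 ≤ k₂ / 2 * r ^ 2 :=
        mul_le_mul_of_nonneg_right hc2 (sq_nonneg r)
      have s2 : c * A ^ p ≤ k₀ / (2 * (p - 1)) * A ^ p :=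
        mul_le_mul_of_nonneg_right hc1 hAp
      rw [mul_add]
      linarith
    have hhalf : k₀ / (p - 1) * A ^ p = 2 * (k₀ / (2 * (p - 1)) * A ^ p) := by
      field_simp
    linarith [hb, hcr]
end

section
/- Let T > 0, r > 1, ε > 0, and let y : [0, T] → ℝ be differentiable with y(t) > 0 for all t ∈ [0, T] and y'(t) ≤ y(t) − ε·y(t)^r for all t ∈ [0, T]. Then for every t ∈ [0, T], y(t) ≤ e^t · y(0) · (1 + ε·y(0)^(r−1)·(e^((r−1)·t) − 1))^(−1/(r−1)). -/
/-- Comparison principle for the Bernoulli-type differential inequality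
`y' ≤ y - ε·y^r` with `r > 1` on `[0,T]`. -/
theorem bernoulli_comparison (T r ε : ℝ) (hT : 0 < T) (hr : 1 < r) (hε : 0 < ε)
    (y y' : ℝ → ℝ)
    (hderiv : ∀ t ∈ Set.Icc 0 T, HasDerivWithinAt y (y' t) (Set.Icc 0 T) t)
    (hpos : ∀ t ∈ Set.Icc 0 T, 0 < y t)
    (hineq : ∀ t ∈ Set.Icc 0 T, y' t ≤ y t - ε * y t ^ r) :
    ∀ t ∈ Set.Icc 0 T, y t ≤
      Real.exp t * y 0 *
        (1 + ε * y 0 ^ (r - 1) * (Real.exp ((r - 1) * t) - 1)) ^ (-(1 / (r - 1))) := by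
  have hr1 : (0:ℝ) < r - 1 := by linarith
  set g : ℝ → ℝ := fun t => Real.exp ((r - 1) * t) * (y t ^ (1 - r) - ε) with hg_def
  set g' : ℝ → ℝ := fun t =>
    (Real.exp ((r - 1) * t) * (r - 1)) * (y t ^ (1 - r) - ε) +
      Real.exp ((r - 1) * t) * (y' t * (1 - r) * y t ^ (1 - r - 1)) with hg'_def
  -- g is monotone on [0,T]
  have hmono : MonotoneOn g (Set.Icc 0 T) := by
    apply monotoneOn_of_hasDerivWithinAt_nonneg (f' := g') (convex_Icc 0 T)
    · -- continuity
      intro t ht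
      have hy := (hderiv t ht).continuousWithinAt
      have h1 : ContinuousWithinAt (fun t => Real.exp ((r - 1) * t)) (Set.Icc 0 T) t :=
        (Real.continuous_exp.comp (continuous_const.mul continuous_id)).continuousWithinAt
      exact h1.mul ((hy.rpow_const (Or.inl (hpos t ht).ne')).sub continuousWithinAt_const)
    · -- derivative
      intro t ht
      have ht' : t ∈ Set.Icc 0 T := interior_subset ht
      have h1 : HasDerivWithinAt (fun t => Real.exp ((r - 1) * t))
          (Real.exp ((r - 1) * t) * (r - 1)) (interior (Set.Icc 0 T)) t := by
        have := ((hasDerivAt_id t).const_mul (r - 1)).exp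
        simpa using this.hasDerivWithinAt
      have h2 : HasDerivWithinAt (fun t => y t ^ (1 - r) - ε)
          (y' t * (1 - r) * y t ^ (1 - r - 1)) (interior (Set.Icc 0 T)) t := by
        exact (((hderiv t ht').mono interior_subset).rpow_const
          (Or.inl (hpos t ht').ne')).sub_const ε
      exact h1.mul h2
    · -- nonnegativity of derivative
      intro t ht
      have ht' : t ∈ Set.Icc 0 T := interior_subset ht
      have hy := hpos t ht'
      have hE : (0:ℝ) < Real.exp ((r - 1) * t) := Real.exp_pos _
      have e0 : (1:ℝ) - r - 1 = -r := by ring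
      have e1 : y t * y t ^ (-r) = y t ^ (1 - r) := by
        rw [show (1:ℝ) - r = 1 + -r by ring,
          Real.rpow_one_add' hy.le (by linarith : 1 + -r ≠ 0)]
      have e2 : y t ^ r * y t ^ (-r) = 1 := by
        rw [← Real.rpow_add hy]; simp
      have hyr : (0:ℝ) ≤ y t ^ (-r) := Real.rpow_nonneg hy.le _
      have key : y' t * y t ^ (-r) ≤ y t ^ (1 - r) - ε := by
        have := mul_le_mul_of_nonneg_right (hineq t ht') hyr
        calc y' t * y t ^ (-r) ≤ (y t - ε * y t ^ r) * y t ^ (-r) := this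
          _ = y t * y t ^ (-r) - ε * (y t ^ r * y t ^ (-r)) := by ring
          _ = y t ^ (1 - r) - ε := by rw [e1, e2]; ring
      have hbr : 0 ≤ (r - 1) * (y t ^ (1 - r) - ε) + y' t * (1 - r) * y t ^ (-r) := by
        nlinarith [key]
      have : g' t = Real.exp ((r - 1) * t) *
          ((r - 1) * (y t ^ (1 - r) - ε) + y' t * (1 - r) * y t ^ (-r)) := by
        simp only [hg'_def, e0]; ring
      rw [this]
      positivity
  -- apply monotonicity
  intro t ht
  have h0 : (0:ℝ) ∈ Set.Icc (0:ℝ) T := ⟨le_refl 0, hT.le⟩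
  have hgle : g 0 ≤ g t := hmono h0 ht ht.1
  set E := Real.exp ((r - 1) * t) with hE_def
  have hE1 : (1:ℝ) ≤ E := by
    rw [hE_def]
    exact Real.one_le_exp (by nlinarith [ht.1])
  have hE : (0:ℝ) < E := lt_of_lt_of_le one_pos hE1
  have hy0 := hpos 0 h0
  have hyt := hpos t ht
  have hg0 : g 0 = y 0 ^ (1 - r) - ε := by simp [hg_def]
  -- A := y 0 ^ (1-r) + ε * (E - 1)
  set A : ℝ := y 0 ^ (1 - r) + ε * (E - 1) with hA_def
  have hA : 0 < A := by
    have : (0:ℝ) < y 0 ^ (1 - r) := Real.rpow_pos_of_pos hy0 _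
    nlinarith
  have hineqA : A ≤ E * y t ^ (1 - r) := by
    have : y 0 ^ (1 - r) - ε ≤ E * (y t ^ (1 - r) - ε) := by
      rw [← hg0]; exact hgle
    nlinarith
  have hAE : A / E ≤ y t ^ (1 - r) := by
    rw [div_le_iff₀ hE]; linarith [hineqA]
  have hAEpos : 0 < A / E := div_pos hA hE
  set q := 1 / (r - 1) with hq_def
  have hqpos : 0 < q := by positivity
  -- raise to power -q (antitone)
  have step : (y t ^ (1 - r)) ^ (-q) ≤ (A / E) ^ (-q) :=
    Real.rpow_le_rpow_of_nonpos hAEpos hAE (by linarith)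
  have lhs_eq : (y t ^ (1 - r)) ^ (-q) = y t := by
    rw [← Real.rpow_mul hyt.le,
      (show (1 - r) * -q = 1 by rw [hq_def, mul_neg, ← neg_mul, neg_sub, mul_one_div_cancel hr1.ne'])]
    exact Real.rpow_one _
  -- B := 1 + ε * y 0 ^ (r-1) * (E - 1)
  set B : ℝ := 1 + ε * y 0 ^ (r - 1) * (E - 1) with hB_def
  have hAB : A = y 0 ^ (1 - r) * B := by
    rw [hB_def, hA_def]
    have : y 0 ^ (1 - r) * y 0 ^ (r - 1) = 1 := by
      rw [← Real.rpow_add hy0]; norm_num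
    linear_combination (-(ε * (E - 1))) * this
  have hBpos : 0 < B := by
    have h1 : (0:ℝ) < y 0 ^ (1 - r) := Real.rpow_pos_of_pos hy0 _
    by_contra h
    push_neg at h
    nlinarith [hAB]
  have hApow : A ^ (-q) = y 0 * B ^ (-q) := by
    rw [hAB, Real.mul_rpow (Real.rpow_pos_of_pos hy0 _).le hBpos.le]
    congr 1
    rw [← Real.rpow_mul hy0.le,
      (show (1 - r) * -q = 1 by rw [hq_def, mul_neg, ← neg_mul, neg_sub, mul_one_div_cancel hr1.ne'])]
    exact Real.rpow_one _
  have hEpow : E ^ q = Real.exp t := by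
    rw [hE_def, ← Real.exp_mul, show (r - 1) * t * q = t by rw [hq_def, mul_comm (r - 1) t, mul_assoc, mul_one_div_cancel hr1.ne', mul_one]]
  have rhs_eq : (A / E) ^ (-q) = Real.exp t * y 0 * B ^ (-q) := by
    rw [Real.div_rpow hA.le hE.le, Real.rpow_neg hE.le, div_eq_mul_inv, inv_inv,
      hApow, hEpow]
    ring
  calc y t = (y t ^ (1 - r)) ^ (-q) := lhs_eq.symm
    _ ≤ (A / E) ^ (-q) := step
    _ = Real.exp t * y 0 * B ^ (-q) := rhs_eq
    _ = Real.exp t * y 0 * B ^ (-(1 / (r - 1))) := by rw [hq_def]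
end

section
/- Let T > 0, c > 0, r > 1 and K ≥ 0. Then there exist constants C > 0 and ε > 0 (depending only on c, r and K) such that every differentiable function y : [0, T] → ℝ with y(t) ≥ 0 for all t ∈ [0, T] and y'(t) ≤ y(t) − c·y(t)^r + K for all t ∈ [0, T] satisfies, for every t ∈ [0, T], y(t) + C ≤ (e^((1−r)·t)·(y(0) + C)^(1−r) + ε·(1 − e^((1−r)·t)))^(1/(1−r)). -/
/-- Analytic core of the behaviour Lemma: for `c > 0`, `r > 1`, `K ≥ 0` there are
`C > 0`, `ε > 0` such that any nonnegative differentiable `y` on `[0,T]` with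
`y' ≤ y - c·y^r + K` satisfies
`y(t) + C ≤ (e^((1-r)t)·(y(0) + C)^(1-r) + ε(1 - e^((1-r)t)))^(1/(1-r))`. -/
theorem behaviour_lemma_core (T c r K : ℝ) (hT : 0 < T) (hc : 0 < c) (hr : 1 < r)
    (hK : 0 ≤ K) :
    ∃ C > (0:ℝ), ∃ ε > (0:ℝ), ∀ y y' : ℝ → ℝ,
      (∀ t ∈ Set.Icc 0 T, 0 ≤ y t) →
      (∀ t ∈ Set.Icc 0 T, HasDerivWithinAt y (y' t) (Set.Icc 0 T) t) →
      (∀ t ∈ Set.Icc 0 T, y' t ≤ y t - c * y t ^ r + K) →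
      ∀ t ∈ Set.Icc 0 T, y t + C ≤
        (Real.exp ((1 - r) * t) * (y 0 + C) ^ (1 - r) +
          ε * (1 - Real.exp ((1 - r) * t))) ^ (1 / (1 - r)) := by
  set s : ℝ := 1 - r with hs_def
  have hs : s < 0 := by rw [hs_def]; linarith
  have hr0 : (0:ℝ) ≤ r := by linarith
  set C : ℝ := K + 1 with hC_def
  have hC : (0:ℝ) < C := by rw [hC_def]; linarith
  have h2r : (0:ℝ) < (2:ℝ) ^ r := Real.rpow_pos_of_pos two_pos r
  have hCr : (0:ℝ) < C ^ r := Real.rpow_pos_of_pos hC r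
  set ε : ℝ := min (c / 2 ^ r) (1 / (2 ^ r * C ^ r)) with hε_def
  have hε : 0 < ε := lt_min (by positivity) (by positivity)
  refine ⟨C, hC, ε, hε, ?_⟩
  intro y y' hy0 hy' hineq t ht
  have hz_pos : ∀ u ∈ Set.Icc (0:ℝ) T, 0 < y u + C := fun u hu => by
    have := hy0 u hu; linarith
  -- key pointwise inequality
  have key : ∀ u ∈ Set.Icc (0:ℝ) T, y' u ≤ (y u + C) - ε * (y u + C) ^ r := by
    intro u hu
    have hyu := hy0 u hu
    have hmax : y u + C ≤ 2 * max (y u) C := by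
      rcases le_total (y u) C with h | h
      · rw [max_eq_right h]; linarith
      · rw [max_eq_left h]; linarith
    have h1 : (y u + C) ^ r ≤ 2 ^ r * (y u ^ r + C ^ r) := by
      calc (y u + C) ^ r ≤ (2 * max (y u) C) ^ r :=
            Real.rpow_le_rpow (by linarith) hmax hr0
        _ = 2 ^ r * (max (y u) C) ^ r :=
            Real.mul_rpow (by norm_num) (le_max_of_le_right hC.le)
        _ ≤ 2 ^ r * (y u ^ r + C ^ r) := by
            apply mul_le_mul_of_nonneg_left _ h2r.le
            rcases max_cases (y u) C with ⟨h, _⟩ | ⟨h, _⟩ <;> rw [h]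
            · nlinarith [Real.rpow_nonneg hC.le r]
            · nlinarith [Real.rpow_nonneg hyu r]
    have hε1 : ε * 2 ^ r ≤ c := by
      have := min_le_left (c / 2 ^ r) (1 / (2 ^ r * C ^ r))
      rw [← hε_def] at this
      calc ε * 2 ^ r ≤ c / 2 ^ r * 2 ^ r := mul_le_mul_of_nonneg_right this h2r.le
        _ = c := by field_simp
    have hε2 : ε * (2 ^ r * C ^ r) ≤ 1 := by
      have := min_le_right (c / 2 ^ r) (1 / (2 ^ r * C ^ r))
      rw [← hε_def] at this
      calc ε * (2 ^ r * C ^ r) ≤ 1 / (2 ^ r * C ^ r) * (2 ^ r * C ^ r) :=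
            mul_le_mul_of_nonneg_right this (by positivity)
        _ = 1 := by field_simp
    have hyr : (0:ℝ) ≤ y u ^ r := Real.rpow_nonneg hyu r
    have h2 : ε * (y u + C) ^ r ≤ c * y u ^ r + 1 := by
      have := mul_le_mul_of_nonneg_left h1 hε.le
      nlinarith
    have := hineq u hu
    rw [hC_def]
    rw [hC_def] at h2
    linarith
  -- the auxiliary monotone function
  set φ : ℝ → ℝ := fun u => Real.exp (-s * u) * ((y u + C) ^ s - ε) with hφ_def
  set φ' : ℝ → ℝ := fun u => Real.exp (-s * u) * (-s * 1) * ((y u + C) ^ s - ε) +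
      Real.exp (-s * u) * (y' u * s * (y u + C) ^ (s - 1)) with hφ'_def
  have hcont_y : ContinuousOn y (Set.Icc 0 T) := fun u hu => (hy' u hu).continuousWithinAt
  have hcont : ContinuousOn φ (Set.Icc 0 T) := by
    apply ContinuousOn.mul
    · exact (Real.continuous_exp.comp (continuous_const.mul continuous_id)).continuousOn
    · apply ContinuousOn.sub _ continuousOn_const
      apply ContinuousOn.rpow_const (hcont_y.add continuousOn_const)
      intro u hu; exact Or.inl (hz_pos u hu).ne'
  have hint : interior (Set.Icc (0:ℝ) T) = Set.Ioo 0 T := interior_Icc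
  have hderiv : ∀ u ∈ interior (Set.Icc (0:ℝ) T),
      HasDerivWithinAt φ (φ' u) (interior (Set.Icc (0:ℝ) T)) u := by
    intro u hu
    rw [hint] at hu ⊢
    have hyu : HasDerivWithinAt y (y' u) (Set.Ioo 0 T) u :=
      (hy' u (Set.Ioo_subset_Icc_self hu)).mono Set.Ioo_subset_Icc_self
    have hzu : HasDerivWithinAt (fun v => y v + C) (y' u) (Set.Ioo 0 T) u :=
      hyu.add_const C
    have hwu : HasDerivWithinAt (fun v => (y v + C) ^ s - ε)
        (y' u * s * (y u + C) ^ (s - 1)) (Set.Ioo 0 T) u :=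
      (hzu.rpow_const (Or.inl (hz_pos u (Set.Ioo_subset_Icc_self hu)).ne')).sub_const ε
    have hEu : HasDerivAt (fun v => Real.exp (-s * v)) (Real.exp (-s * u) * (-s * 1)) u :=
      ((hasDerivAt_id u).const_mul (-s)).exp
    exact hEu.hasDerivWithinAt.mul hwu
  have hnonneg : ∀ u ∈ interior (Set.Icc (0:ℝ) T), 0 ≤ φ' u := by
    intro u hu
    rw [hint] at hu
    have huI := Set.Ioo_subset_Icc_self hu
    have hz := hz_pos u huI
    have hzs1 : (0:ℝ) < (y u + C) ^ (s - 1) := Real.rpow_pos_of_pos hz (s - 1)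
    have e1 : (y u + C) ^ (s - 1) * (y u + C) = (y u + C) ^ s := by
      rw [← Real.rpow_add_one hz.ne' (s - 1)]; norm_num
    have e2 : (y u + C) ^ (s - 1) * (y u + C) ^ r = 1 := by
      rw [← Real.rpow_add hz]
      have : s - 1 + r = 0 := by rw [hs_def]; ring
      rw [this, Real.rpow_zero]
    have hk := key u huI
    have hmul := mul_le_mul_of_nonneg_left hk hzs1.le
    have expand : (y u + C) ^ (s - 1) * ((y u + C) - ε * (y u + C) ^ r)
        = (y u + C) ^ s - ε := by linear_combination e1 - ε * e2
    have hkey2 : (y u + C) ^ (s - 1) * y' u ≤ (y u + C) ^ s - ε := by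
      rw [← expand]; exact hmul
    have hE := Real.exp_pos (-s * u)
    have h0 : 0 ≤ Real.exp (-s * u) * (-s) *
        (((y u + C) ^ s - ε) - (y u + C) ^ (s - 1) * y' u) := by
      apply mul_nonneg (mul_nonneg hE.le (by linarith)) (by linarith)
    have heq : Real.exp (-s * u) * (-s) *
        (((y u + C) ^ s - ε) - (y u + C) ^ (s - 1) * y' u) = φ' u := by
      rw [hφ'_def]; ring
    linarith [heq ▸ h0]
  have hmono : MonotoneOn φ (Set.Icc 0 T) :=
    monotoneOn_of_hasDerivWithinAt_nonneg (convex_Icc 0 T) hcont hderiv hnonneg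
  have h0T : (0:ℝ) ∈ Set.Icc (0:ℝ) T := Set.mem_Icc.mpr ⟨le_refl 0, hT.le⟩
  have hφ0 : φ 0 ≤ φ t := hmono h0T ht ht.1
  have hw0 : (0:ℝ) < (y 0 + C) ^ s := Real.rpow_pos_of_pos (hz_pos 0 h0T) s
  have hwt : (0:ℝ) < (y t + C) ^ s := Real.rpow_pos_of_pos (hz_pos t ht) s
  have hest : Real.exp (s * t) ≤ 1 := by
    rw [← Real.exp_zero]
    exact Real.exp_le_exp.mpr (by nlinarith [ht.1])
  have hest0 : (0:ℝ) < Real.exp (s * t) := Real.exp_pos _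
  -- unfold φ 0 ≤ φ t
  have hφ0' : (y 0 + C) ^ s - ε ≤ Real.exp (-s * t) * ((y t + C) ^ s - ε) := by
    have : φ 0 = (y 0 + C) ^ s - ε := by
      rw [hφ_def]; simp
    rw [hφ_def] at hφ0; simpa [this] using hφ0
  have hmul := mul_le_mul_of_nonneg_left hφ0' hest0.le
  have hee : Real.exp (s * t) * Real.exp (-s * t) = 1 := by
    rw [← Real.exp_add]; ring_nf; exact Real.exp_zero
  have hA : Real.exp (s * t) * (y 0 + C) ^ s + ε * (1 - Real.exp (s * t))
      ≤ (y t + C) ^ s := by nlinarith [hmul, hee]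
  have hA_pos : 0 < Real.exp (s * t) * (y 0 + C) ^ s + ε * (1 - Real.exp (s * t)) := by
    nlinarith [hest0, hest, hw0, hε]
  have hfinal := Real.rpow_le_rpow_of_nonpos hA_pos hA (by
    have : 1 / s < 0 := by exact one_div_neg.mpr hs
    linarith)
  rw [one_div, Real.rpow_rpow_inv (hz_pos t ht).le hs.ne] at hfinal
  calc y t + C ≤ (Real.exp (s * t) * (y 0 + C) ^ s +
        ε * (1 - Real.exp (s * t))) ^ ((1:ℝ) / s) := by
        rw [one_div]; exact hfinal
    _ = _ := by rw [hs_def]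
end

section
/- Let (Ω, μ) be a finite measure space, let p > 2 with conjugate exponent q = p/(p−1), and let F : ℝ → ℝ be continuous, monotone nondecreasing, and satisfy |F(ρ)| ≤ a₀·|ρ|^(p−1) + a₁·|ρ| for all ρ ∈ ℝ, where a₀ > 0 and a₁ ≥ 0. Let u ∈ L^p(μ) and η ∈ L^q(μ), and suppose that for every bounded measurable function w : Ω → ℝ we have ∫_Ω (η(x) − F(w(x)))·(u(x) − w(x)) dμ(x) ≥ 0. Then η(x) = F(u(x)) for μ-almost every x ∈ Ω. -/
open MeasureTheory Filter Topology ENNReal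

section Aux

variable {Ω : Type*} [MeasurableSpace Ω] {μ : Measure Ω}

/-- Truncation at level `k`. -/
noncomputable def minty_T (k : ℕ) (r : ℝ) : ℝ := max (-(k : ℝ)) (min (k : ℝ) r)

lemma minty_T_abs_le_abs (k : ℕ) (r : ℝ) : |minty_T k r| ≤ |r| := by
  have hk : (0 : ℝ) ≤ (k : ℝ) := Nat.cast_nonneg k
  rw [abs_le]
  constructor
  · exact le_max_of_le_right (le_min (le_trans (neg_nonpos.2 (abs_nonneg r)) hk) (neg_abs_le r))
  · exact max_le (le_trans (neg_nonpos.2 hk) (abs_nonneg r))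
      ((min_le_right _ _).trans (le_abs_self r))

lemma minty_T_abs_le (k : ℕ) (r : ℝ) : |minty_T k r| ≤ (k : ℝ) := by
  have hk : (0 : ℝ) ≤ (k : ℝ) := Nat.cast_nonneg k
  rw [abs_le]
  exact ⟨le_max_left _ _, max_le (by linarith) (min_le_left _ _)⟩

lemma minty_T_tendsto (r : ℝ) : Tendsto (fun k : ℕ => minty_T k r) atTop (𝓝 r) := by
  refine tendsto_const_nhds.congr' ?_
  rw [Filter.EventuallyEq, eventually_atTop]
  refine ⟨⌈|r|⌉₊, fun k hk => ?_⟩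
  have habs : |r| ≤ (k : ℝ) := (Nat.le_ceil |r|).trans (Nat.cast_le.2 hk)
  have h1 : r ≤ (k : ℝ) := (le_abs_self r).trans habs
  have h2 : -(k : ℝ) ≤ r := by
    have := neg_abs_le r; linarith
  simp [minty_T, min_eq_right h1, max_eq_right h2]

end Aux

set_option maxHeartbeats 1000000 in
/-- Minty-type identification: on a finite measure space, if `F` is continuous, monotone
nondecreasing with growth `|F(ρ)| ≤ a₀|ρ|^(p-1) + a₁|ρ|`, `u ∈ L^p`, `η ∈ L^q`
(`q = p/(p-1)`), and `∫ (η - F(w))·(u - w) dμ ≥ 0` for every bounded measurable `w`,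
then `η = F(u)` almost everywhere. -/
theorem minty_identification {Ω : Type*} [MeasurableSpace Ω] (μ : Measure Ω)
    [IsFiniteMeasure μ]
    (p q a₀ a₁ : ℝ) (hp : 2 < p) (hq : q = p / (p - 1)) (ha₀ : 0 < a₀) (ha₁ : 0 ≤ a₁)
    (F : ℝ → ℝ) (hFc : Continuous F) (hFm : Monotone F)
    (hFg : ∀ ρ : ℝ, |F ρ| ≤ a₀ * |ρ| ^ (p - 1) + a₁ * |ρ|)
    (u η : Ω → ℝ)
    (hu : MemLp u (ENNReal.ofReal p) μ)
    (hη : MemLp η (ENNReal.ofReal q) μ)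
    (hminty : ∀ w : Ω → ℝ, Measurable w → (∃ M : ℝ, ∀ x, |w x| ≤ M) →
      0 ≤ ∫ x, (η x - F (w x)) * (u x - w x) ∂μ) :
    ∀ᵐ x ∂μ, η x = F (u x) := by
  -- basic exponent facts
  have hp0 : 0 < p := by linarith
  have hpm1 : 0 < p - 1 := by linarith
  have hq0 : 0 < q := by rw [hq]; positivity
  have hq1 : (1 : ℝ) ≤ q := by
    rw [hq, le_div_iff₀ hpm1]; linarith
  have hqle : q ≤ p := by
    rw [hq, div_le_iff₀ hpm1]; nlinarith
  have hQP : ENNReal.ofReal q ≤ ENNReal.ofReal p := ENNReal.ofReal_le_ofReal hqle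
  have h1q : (1 : ℝ≥0∞) ≤ ENNReal.ofReal q := ENNReal.one_le_ofReal.2 hq1
  have hQeq : ENNReal.ofReal q = ENNReal.ofReal p / ENNReal.ofReal (p - 1) := by
    rw [hq, ENNReal.ofReal_div_of_pos hpm1]
  have hconj : (1 : ℝ≥0∞) / 1 = 1 / ENNReal.ofReal q + 1 / ENNReal.ofReal p := by
    have hsum : q⁻¹ + p⁻¹ = 1 := by
      rw [hq]
      field_simp
      ring
    rw [one_div, one_div, one_div, inv_one,
      ← ENNReal.ofReal_inv_of_pos hq0, ← ENNReal.ofReal_inv_of_pos hp0,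
      ← ENNReal.ofReal_add (by positivity) (by positivity), hsum, ENNReal.ofReal_one]
  -- measurable representatives
  have hau : AEMeasurable u μ := hu.1.aemeasurable
  have haη : AEMeasurable η μ := hη.1.aemeasurable
  set u' : Ω → ℝ := hau.mk u with hu'def
  set η' : Ω → ℝ := haη.mk η with hη'def
  have hu'm : Measurable u' := hau.measurable_mk
  have hη'm : Measurable η' := haη.measurable_mk
  have huu' : u =ᵐ[μ] u' := hau.ae_eq_mk
  have hηη' : η =ᵐ[μ] η' := haη.ae_eq_mk
  have hu' : MemLp u' (ENNReal.ofReal p) μ := hu.ae_eq huu'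
  -- Hölder integrability
  have hInt : ∀ f g : Ω → ℝ, MemLp f (ENNReal.ofReal q) μ → MemLp g (ENNReal.ofReal p) μ →
      Integrable (fun x => f x * g x) μ := by
    intro f g hf hg
    haveI : ENNReal.HolderTriple (ENNReal.ofReal q) (ENNReal.ofReal p) 1 := ⟨by simpa [one_div] using hconj.symm⟩
    exact memLp_one_iff_integrable.mp (hg.smul hf (r := 1))
  -- membership of the weight functions
  have hmemP : ∀ M : ℝ, MemLp (fun x => |u' x| + M) (ENNReal.ofReal p) μ := by
    intro M
    have h1 : MemLp (fun x => |u' x|) (ENNReal.ofReal p) μ := by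
      have := hu'.norm
      simpa [Real.norm_eq_abs] using this
    exact h1.add (memLp_const M)
  have hmemG : ∀ M : ℝ, 0 ≤ M →
      MemLp (fun x => a₀ * (|u' x| + M) ^ (p - 1) + a₁ * (|u' x| + M)) (ENNReal.ofReal q) μ := by
    intro M hM
    have h1 : MemLp (fun x => (|u' x| + M) ^ (p - 1)) (ENNReal.ofReal q) μ := by
      have h2 := (hmemP M).norm_rpow_div (ENNReal.ofReal (p - 1))
      rw [← hQeq] at h2
      refine h2.ae_eq (Eventually.of_forall fun x => ?_)
      have hnn : (0 : ℝ) ≤ |u' x| + M := by positivity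
      rw [Real.norm_eq_abs, abs_of_nonneg hnn, ENNReal.toReal_ofReal hpm1.le]
    have h3 : MemLp (fun x => |u' x| + M) (ENNReal.ofReal q) μ :=
      (hmemP M).mono_exponent hQP
    exact (h1.const_mul a₀).add (h3.const_mul a₁)
  -- growth bound helper
  have hFb : ∀ (M : ℝ) (x : Ω) (r : ℝ), |r| ≤ |u' x| + M →
      |F r| ≤ a₀ * (|u' x| + M) ^ (p - 1) + a₁ * (|u' x| + M) := by
    intro M x r h
    refine (hFg r).trans (add_le_add ?_ ?_)
    · exact mul_le_mul_of_nonneg_left (Real.rpow_le_rpow (abs_nonneg r) h hpm1.le) ha₀.le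
    · exact mul_le_mul_of_nonneg_left h ha₁
  -- Key step (Minty trick): for every bounded measurable v, ∫ (η - F(u')) v ≤ 0
  have keyA : ∀ (v : Ω → ℝ) (M : ℝ), Measurable v → (∀ x, |v x| ≤ M) → 0 ≤ M →
      (∫ x, (η x - F (u' x)) * v x ∂μ) ≤ 0 := by
    intro v M hvm hvM hM0
    set G : Ω → ℝ := fun x => a₀ * (|u' x| + M) ^ (p - 1) + a₁ * (|u' x| + M) with hGdef
    have hG : MemLp G (ENNReal.ofReal q) μ := hmemG M hM0
    have hGnn : ∀ x, 0 ≤ G x := by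
      intro x
      have h1 : (0:ℝ) ≤ (|u' x| + M) ^ (p - 1) := Real.rpow_nonneg (by positivity) _
      have h2 : (0:ℝ) ≤ |u' x| + M := by positivity
      positivity
    have hηG : MemLp (fun x => ‖η x‖ + G x) (ENNReal.ofReal q) μ := hη.norm.add hG
    -- inner limit: fixed ε
    have keyB : ∀ ε : ℝ, 0 < ε → ε ≤ 1 →
        (∫ x, (η x - F (u' x + ε * v x)) * v x ∂μ) ≤ 0 := by
      intro ε hε hε1
      have hεM : ∀ x, |ε * v x| ≤ M := by
        intro x
        rw [abs_mul, abs_of_pos hε]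
        calc ε * |v x| ≤ 1 * M := by
              have := hvM x
              have hv0 := abs_nonneg (v x)
              nlinarith
          _ = M := one_mul M
      -- the test functions
      set w : ℕ → Ω → ℝ := fun k x => minty_T k (u' x) + ε * v x with hwdef
      have hwm : ∀ k, Measurable (w k) := by
        intro k
        have h1 : Measurable fun x => minty_T k (u' x) := by
          unfold minty_T
          exact measurable_const.max (measurable_const.min hu'm)
        exact h1.add (hvm.const_mul ε)
      have hwb : ∀ k x, |w k x| ≤ |u' x| + M := by
        intro k x
        calc |w k x| ≤ |minty_T k (u' x)| + |ε * v x| := abs_add_le _ _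
          _ ≤ |u' x| + M := add_le_add (minty_T_abs_le_abs k (u' x)) (hεM x)
      have h0 : ∀ k, 0 ≤ ∫ x, (η x - F (w k x)) * (u x - w k x) ∂μ := by
        intro k
        refine hminty (w k) (hwm k) ⟨(k : ℝ) + M, fun x => ?_⟩
        calc |w k x| ≤ |minty_T k (u' x)| + |ε * v x| := abs_add_le _ _
          _ ≤ (k : ℝ) + M := add_le_add (minty_T_abs_le k (u' x)) (hεM x)
      -- dominated convergence in k
      set bound : Ω → ℝ := fun x => (‖η x‖ + G x) * (2 * |u' x| + M) with hbdef
      have hbint : Integrable bound μ := by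
        refine hInt _ _ hηG ?_
        have h1 : MemLp (fun x => 2 * |u' x|) (ENNReal.ofReal p) μ := by
          have := hu'.norm.const_mul (2:ℝ)
          simpa [Real.norm_eq_abs] using this
        exact h1.add (memLp_const M)
      have hmeas : ∀ k, AEStronglyMeasurable (fun x => (η x - F (w k x)) * (u x - w k x)) μ := by
        intro k
        exact ((hη.1.sub (hFc.measurable.comp (hwm k)).aestronglyMeasurable).mul
          (hu.1.sub ((hwm k)).aestronglyMeasurable))
      have hbnd : ∀ k, ∀ᵐ x ∂μ, ‖(η x - F (w k x)) * (u x - w k x)‖ ≤ bound x := by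
        intro k
        filter_upwards [huu'] with x hx
        rw [Real.norm_eq_abs, abs_mul]
        refine mul_le_mul ?_ ?_ (abs_nonneg _) ?_
        · calc |η x - F (w k x)| ≤ |η x| + |F (w k x)| := abs_sub _ _
            _ ≤ ‖η x‖ + G x := by
                rw [Real.norm_eq_abs]
                exact add_le_add le_rfl (hFb M x _ (hwb k x))
        · calc |u x - w k x| ≤ |u x| + |w k x| := abs_sub _ _
            _ ≤ |u' x| + (|u' x| + M) := by
                rw [hx]
                exact add_le_add le_rfl (hwb k x)
            _ = 2 * |u' x| + M := by ring
        · exact add_nonneg (norm_nonneg _) (hGnn x)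
      have hlim : ∀ᵐ x ∂μ, Tendsto (fun k => (η x - F (w k x)) * (u x - w k x)) atTop
          (𝓝 ((η x - F (u' x + ε * v x)) * (u x - (u' x + ε * v x)))) := by
        refine Eventually.of_forall fun x => ?_
        have hcont : Continuous (fun t : ℝ => (η x - F (t + ε * v x)) * (u x - (t + ε * v x))) :=
          (continuous_const.sub (hFc.comp (continuous_id.add continuous_const))).mul
            (continuous_const.sub (continuous_id.add continuous_const))
        exact (hcont.tendsto (u' x)).comp (minty_T_tendsto (u' x))
      have htend := tendsto_integral_of_dominated_convergence bound hmeas hbint hbnd hlim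
      have hge : 0 ≤ ∫ x, (η x - F (u' x + ε * v x)) * (u x - (u' x + ε * v x)) ∂μ :=
        ge_of_tendsto' htend h0
      have heq : (∫ x, (η x - F (u' x + ε * v x)) * (u x - (u' x + ε * v x)) ∂μ)
          = -ε * ∫ x, (η x - F (u' x + ε * v x)) * v x ∂μ := by
        rw [← integral_const_mul]
        refine integral_congr_ae ?_
        filter_upwards [huu'] with x hx
        rw [hx]; ring
      rw [heq] at hge
      nlinarith [hge]
    -- outer limit: ε → 0
    have hεn : ∀ n : ℕ, (0:ℝ) < 1 / ((n:ℝ) + 1) := by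
      intro n; positivity
    have hεn1 : ∀ n : ℕ, 1 / ((n:ℝ) + 1) ≤ 1 := by
      intro n
      rw [div_le_one (by positivity)]
      simp
    have hle : ∀ n : ℕ, (∫ x, (η x - F (u' x + (1 / ((n:ℝ) + 1)) * v x)) * v x ∂μ) ≤ 0 :=
      fun n => keyB _ (hεn n) (hεn1 n)
    set bound2 : Ω → ℝ := fun x => (‖η x‖ + G x) * M with hb2def
    have hb2int : Integrable bound2 μ := (hηG.integrable h1q).mul_const M
    have hmeas2 : ∀ n : ℕ,
        AEStronglyMeasurable (fun x => (η x - F (u' x + (1 / ((n:ℝ) + 1)) * v x)) * v x) μ := by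
      intro n
      exact (hη.1.sub (hFc.measurable.comp (hu'm.add (hvm.const_mul _))).aestronglyMeasurable).mul
        hvm.aestronglyMeasurable
    have hbnd2 : ∀ n : ℕ, ∀ᵐ x ∂μ,
        ‖(η x - F (u' x + (1 / ((n:ℝ) + 1)) * v x)) * v x‖ ≤ bound2 x := by
      intro n
      refine Eventually.of_forall fun x => ?_
      rw [Real.norm_eq_abs, abs_mul]
      have harg : |u' x + (1 / ((n:ℝ) + 1)) * v x| ≤ |u' x| + M := by
        calc |u' x + (1 / ((n:ℝ) + 1)) * v x| ≤ |u' x| + |(1 / ((n:ℝ) + 1)) * v x| := abs_add_le _ _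
          _ ≤ |u' x| + M := by
              refine add_le_add le_rfl ?_
              rw [abs_mul, abs_of_pos (hεn n)]
              have := hvM x
              have := abs_nonneg (v x)
              nlinarith [hεn1 n, hεn n]
      refine mul_le_mul ?_ (hvM x) (abs_nonneg _) ?_
      · calc |η x - F (u' x + (1 / ((n:ℝ) + 1)) * v x)| ≤ |η x| + |F _| := abs_sub _ _
          _ ≤ ‖η x‖ + G x := by
              rw [Real.norm_eq_abs]
              exact add_le_add le_rfl (hFb M x _ harg)
      · exact add_nonneg (norm_nonneg _) (hGnn x)
    have hlim2 : ∀ᵐ x ∂μ, Tendsto (fun n : ℕ => (η x - F (u' x + (1 / ((n:ℝ) + 1)) * v x)) * v x)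
        atTop (𝓝 ((η x - F (u' x)) * v x)) := by
      refine Eventually.of_forall fun x => ?_
      have hcont : Continuous (fun e : ℝ => (η x - F (u' x + e * v x)) * v x) :=
        (continuous_const.sub (hFc.comp (continuous_const.add (continuous_id.mul
          continuous_const)))).mul continuous_const
      have h0 := (hcont.tendsto 0).comp tendsto_one_div_add_atTop_nhds_zero_nat
      simpa [Function.comp_def] using h0
    have htend2 := tendsto_integral_of_dominated_convergence bound2 hmeas2 hb2int hbnd2 hlim2
    exact le_of_tendsto' htend2 hle
  -- conclude via a sign test function
  set v : Ω → ℝ := fun x => if F (u' x) < η' x then (1:ℝ) else -1 with hvdef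
  have hvm : Measurable v := by
    refine Measurable.ite ?_ measurable_const measurable_const
    exact measurableSet_lt (hFc.measurable.comp hu'm) hη'm
  have hvb : ∀ x, |v x| ≤ 1 := by
    intro x
    simp only [hvdef]
    split_ifs <;> norm_num
  have hI := keyA v 1 hvm hvb zero_le_one
  have hpt : ∀ᵐ x ∂μ, (η x - F (u' x)) * v x = |η' x - F (u' x)| := by
    filter_upwards [hηη'] with x hx
    rw [hx]
    simp only [hvdef]
    split_ifs
    · rename_i h
      rw [mul_one, abs_of_pos (by linarith)]
    · rename_i h
      push_neg at h
      rw [abs_of_nonpos (by linarith)]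
      ring
  rw [integral_congr_ae hpt] at hI
  have hFu'L1 : Integrable (fun x => F (u' x)) μ := by
    have hmem : MemLp (fun x => F (u' x)) (ENNReal.ofReal q) μ := by
      refine (hmemG 0 le_rfl).of_le (hFc.measurable.comp hu'm).aestronglyMeasurable ?_
      refine Eventually.of_forall fun x => ?_
      rw [Real.norm_eq_abs, Real.norm_eq_abs]
      have h1 := hFb 0 x (u' x) (by simp)
      have h2 : (0:ℝ) ≤ a₀ * (|u' x| + 0) ^ (p - 1) + a₁ * (|u' x| + 0) := by
        have := Real.rpow_nonneg (abs_nonneg (u' x)) (p-1)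
        have := abs_nonneg (u' x)
        simp only [add_zero]
        positivity
      rw [abs_of_nonneg h2]
      exact h1
    exact hmem.integrable h1q
  have hη'L1 : Integrable η' μ := (hη.ae_eq hηη').integrable h1q
  have habsint : Integrable (fun x => |η' x - F (u' x)|) μ := (hη'L1.sub hFu'L1).abs
  have hzero : (∫ x, |η' x - F (u' x)| ∂μ) = 0 :=
    le_antisymm hI (integral_nonneg fun x => abs_nonneg _)
  have hae := (integral_eq_zero_iff_of_nonneg_ae
    (Eventually.of_forall fun x => abs_nonneg _) habsint).mp hzero
  filter_upwards [hae, hηη', huu'] with x h1 h2 h3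
  have : |η' x - F (u' x)| = 0 := h1
  have h4 : η' x = F (u' x) := by
    rwa [abs_eq_zero, sub_eq_zero] at this
  rw [h2, h3, h4]
end
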